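/- Let A and S be linear operators on g with A* = −A and S* = S, and let α ∈ ℝ. Then the pair of conditions {mYB(A;α), Hom(S,A)} holds if and only if the pair of conditions {mYB(A;α), mYB(A+S;α)} holds. -/

import Mathlib

open Matrix

attribute [local instance] Matrix.normedAddCommGroup Matrix.normedSpace

/-- The trace form `⟨X,Y⟩ = trace (X⬝Y)` on `g = Matrix (Fin N) (Fin N) ℝ`. -/
noncomputable def tf {N : ℕ} (X Y : Matrix (Fin N) (Fin N) ℝ) : ℝ := (X * Y).trace

/-- The modified Yang–Baxter equation mYB(R;α). -/
def mYB {N : ℕ} (R : Matrix (Fin N) (Fin N) ℝ →ₗ[ℝ] Matrix (Fin N) (Fin N) ℝ) (α : ℝ) : Prop :=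
  ∀ X Y, R X * R Y - R Y * R X
    = R ((R X * Y - Y * R X) + (X * R Y - R Y * X)) - α • (X * Y - Y * X)

/-- The condition Hom(S,A). -/
def homc {N : ℕ} (S A : Matrix (Fin N) (Fin N) ℝ →ₗ[ℝ] Matrix (Fin N) (Fin N) ℝ) : Prop :=
  ∀ X Y, S X * S Y - S Y * S X = S ((A X * Y - Y * A X) + (X * A Y - A Y * X))

/-- The "Hom-defect" `Q(X,Y) = [SX,SY] - S([AX,Y]+[X,AY])`. -/
def Qe {N : ℕ} (A S : Matrix (Fin N) (Fin N) ℝ →ₗ[ℝ] Matrix (Fin N) (Fin N) ℝ)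
    (X Y : Matrix (Fin N) (Fin N) ℝ) : Matrix (Fin N) (Fin N) ℝ :=
  S X * S Y - S Y * S X - S ((A X * Y - Y * A X) + (X * A Y - A Y * X))

/-- The cross term `E(X,Y) = [AX,SY]+[SX,AY] - (A+S)([SX,Y]+[X,SY])`. -/
def Ee {N : ℕ} (A S : Matrix (Fin N) (Fin N) ℝ →ₗ[ℝ] Matrix (Fin N) (Fin N) ℝ)
    (X Y : Matrix (Fin N) (Fin N) ℝ) : Matrix (Fin N) (Fin N) ℝ :=
  (A X * S Y - S Y * A X) + (S X * A Y - A Y * S X)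
    - A ((S X * Y - Y * S X) + (X * S Y - S Y * X))
    - S ((S X * Y - Y * S X) + (X * S Y - S Y * X))

lemma tf_nondeg {N : ℕ} (M : Matrix (Fin N) (Fin N) ℝ)
    (h : ∀ Z, (M * Z).trace = 0) : M = 0 := by
  ext i j
  have := h (single j i 1)
  simp [Matrix.trace, Matrix.diag, Matrix.mul_apply, Matrix.single,
    ite_and, Finset.sum_ite_eq, Finset.sum_ite_eq'] at this
  simpa using this

lemma key_trace {N : ℕ} (A S : Matrix (Fin N) (Fin N) ℝ →ₗ[ℝ] Matrix (Fin N) (Fin N) ℝ)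
    (hA' : ∀ U V : Matrix (Fin N) (Fin N) ℝ, ((A U) * V).trace = -((U * A V).trace))
    (hS' : ∀ U V : Matrix (Fin N) (Fin N) ℝ, ((S U) * V).trace = (U * S V).trace)
    (X Y Z : Matrix (Fin N) (Fin N) ℝ) :
    ((Ee A S X Y * Z).trace : ℝ)
      = -((Qe A S Y Z * X).trace) - (Qe A S Z X * Y).trace := by
  unfold Qe Ee
  rw [sub_mul, sub_mul, trace_sub, trace_sub,
    hA' ((S X * Y - Y * S X) + (X * S Y - S Y * X)) Z,
    hS' ((S X * Y - Y * S X) + (X * S Y - S Y * X)) Z,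
    sub_mul (S Y * S Z - S Z * S Y), trace_sub,
    hS' ((A Y * Z - Z * A Y) + (Y * A Z - A Z * Y)) X,
    sub_mul (S Z * S X - S X * S Z), trace_sub,
    hS' ((A Z * X - X * A Z) + (Z * A X - A X * Z)) Y]
  simp only [add_mul, sub_mul, mul_add, mul_sub, trace_add, trace_sub]
  linarith [trace_mul_cycle (A X) (S Y) Z, trace_mul_cycle (A X) Z (S Y),
    trace_mul_cycle (A Y) Z (S X), trace_mul_cycle (A Y) (S X) Z,
    trace_mul_cycle Y (A Z) (S X), trace_mul_cycle Y (S X) (A Z),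
    trace_mul_cycle X (S Y) (A Z), trace_mul_cycle X (A Z) (S Y),
    trace_mul_cycle (S X) Y (S Z), trace_mul_cycle (S X) (S Z) Y,
    trace_mul_cycle (S Y) (S Z) X, trace_mul_cycle (S Y) X (S Z)]

lemma pe {N : ℕ} (A S : Matrix (Fin N) (Fin N) ℝ →ₗ[ℝ] Matrix (Fin N) (Fin N) ℝ)
    (α : ℝ) (h : mYB A α) :
    mYB (A + S) α ↔ ∀ X Y, Qe A S X Y + Ee A S X Y = 0 := by
  constructor
  · intro h2 X Y
    have h3 := h X Y
    have h4 := h2 X Y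
    have h5 : Qe A S X Y + Ee A S X Y
        = ((A + S) X * (A + S) Y - (A + S) Y * (A + S) X
            - ((A + S) (((A + S) X * Y - Y * (A + S) X) + (X * (A + S) Y - (A + S) Y * X))
              - α • (X * Y - Y * X)))
          - (A X * A Y - A Y * A X
            - (A ((A X * Y - Y * A X) + (X * A Y - A Y * X)) - α • (X * Y - Y * X))) := by
      simp only [Qe, Ee, LinearMap.add_apply, add_mul, mul_add, sub_mul, mul_sub,
        map_add, map_sub]
      abel
    rw [h5, h4, h3]
    simp
  · intro h2 X Y
    have h3 := h X Y
    have h4 := h2 X Y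
    rw [← sub_eq_zero]
    have h5 : (A + S) X * (A + S) Y - (A + S) Y * (A + S) X
          - ((A + S) (((A + S) X * Y - Y * (A + S) X) + (X * (A + S) Y - (A + S) Y * X))
            - α • (X * Y - Y * X))
        = (Qe A S X Y + Ee A S X Y)
          + (A X * A Y - A Y * A X
            - (A ((A X * Y - Y * A X) + (X * A Y - A Y * X)) - α • (X * Y - Y * X))) := by
      simp only [Qe, Ee, LinearMap.add_apply, add_mul, mul_add, sub_mul, mul_sub,
        map_add, map_sub]
      abel
    rw [h5, h4, h3]
    simp

theorem statement2 (N : ℕ) (hN : 1 ≤ N)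
    (A S : Matrix (Fin N) (Fin N) ℝ →ₗ[ℝ] Matrix (Fin N) (Fin N) ℝ)
    (hA : ∀ X Y, tf (A X) Y = - tf X (A Y))
    (hS : ∀ X Y, tf (S X) Y = tf X (S Y))
    (α : ℝ) :
    (mYB A α ∧ homc S A) ↔ (mYB A α ∧ mYB (A + S) α) := by
  have hA' : ∀ U V : Matrix (Fin N) (Fin N) ℝ, ((A U) * V).trace = -((U * A V).trace) :=
    fun U V => by simpa [tf] using hA U V
  have hS' : ∀ U V : Matrix (Fin N) (Fin N) ℝ, ((S U) * V).trace = (U * S V).trace :=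
    fun U V => by simpa [tf] using hS U V
  constructor
  · rintro ⟨h1, h2⟩
    refine ⟨h1, ?_⟩
    have hQ : ∀ X Y, Qe A S X Y = 0 := by
      intro X Y
      simp only [Qe, sub_eq_zero]
      exact h2 X Y
    have hE : ∀ X Y, Ee A S X Y = 0 := by
      intro X Y
      refine tf_nondeg _ fun Z => ?_
      rw [key_trace A S hA' hS' X Y Z, hQ Y Z, hQ Z X]
      simp
    exact (pe A S α h1).mpr fun X Y => by rw [hQ, hE, add_zero]
  · rintro ⟨h1, h2⟩
    refine ⟨h1, ?_⟩
    have hPE := (pe A S α h1).mp h2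
    have h0 : ∀ X Y Z, ((Qe A S X Y) * Z).trace - ((Qe A S Y Z) * X).trace
        - ((Qe A S Z X) * Y).trace = 0 := by
      intro X Y Z
      have := congrArg (fun M => (M * Z).trace) (hPE X Y)
      simp only [add_mul, trace_add, zero_mul, trace_zero] at this
      rw [key_trace A S hA' hS' X Y Z] at this
      linarith
    have hQ0 : ∀ X Y, Qe A S X Y = 0 := by
      intro X Y
      refine tf_nondeg _ fun Z => ?_
      linarith [h0 X Y Z, h0 Y Z X, h0 Z X Y]
    intro X Y
    have := hQ0 X Y
    simp only [Qe, sub_eq_zero] at this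
    exact this
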